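/- Let G be a tree with m ≥ 1 edges and let k ≥ 0 be an integer. Then α_{k-reg}(L(G)) ≥ √m / (√30 · χ_k(L(G))), where L(G) is the line graph of G. -/

import Mathlib

set_option maxHeartbeats 1000000


open SimpleGraph

/-- The degree of a vertex `v` in `G`: the number of neighbors of `v`. -/
noncomputable def degN {V : Type*} (G : SimpleGraph V) (v : V) : ℕ := {u | G.Adj v u}.ncard

/-- A set of vertices is `k`-independent if the induced subgraph has maximum degree at
most `k`, i.e. every vertex of the set has at most `k` neighbors inside the set. -/
def IsKIndepSet {V : Type*} (G : SimpleGraph V) (k : ℕ) (S : Set V) : Prop :=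
  ∀ v ∈ S, {u | u ∈ S ∧ G.Adj v u}.ncard ≤ k

/-- A set of vertices is regular if all its vertices have the same degree in `G`. -/
def IsRegularSet {V : Type*} (G : SimpleGraph V) (S : Set V) : Prop :=
  ∀ u ∈ S, ∀ v ∈ S, degN G u = degN G v

/-- The regular `k`-independence number `α_{k-reg}(G)`: the maximum cardinality of a set
of vertices that is both `k`-independent and regular. -/
noncomputable def regKIndepNum {V : Type*} (G : SimpleGraph V) (k : ℕ) : ℕ :=
  sSup {m : ℕ | ∃ S : Set V, S.ncard = m ∧ IsKIndepSet G k S ∧ IsRegularSet G S}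

/-- The `k`-chromatic number `χ_k(G)`: the least number of colors needed so that every
color class is a `k`-independent set. -/
noncomputable def kChromNum {V : Type*} (G : SimpleGraph V) (k : ℕ) : ℕ :=
  sInf {c : ℕ | ∃ f : V → Fin c, ∀ i : Fin c, IsKIndepSet G k {v | f v = i}}

noncomputable def auxF {V : Type*} [Fintype V] (G : SimpleGraph V) [DecidableRel G.Adj] :
    Sym2 V → ℕ :=
  Sym2.lift ⟨fun u v => G.degree u + G.degree v, fun u v => add_comm _ _⟩

@[simp] lemma auxF_mk {V : Type*} [Fintype V] (G : SimpleGraph V) [DecidableRel G.Adj] (u v : V) :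
    auxF G s(u,v) = G.degree u + G.degree v := rfl


section AuxLemmas
variable {V : Type*} [Fintype V] [DecidableEq V] {G : SimpleGraph V} [DecidableRel G.Adj]

open Finset

lemma no_adj_leaves (hc : G.Connected) {u v : V} (huv : G.Adj u v)
    (hu : G.degree u = 1) (hv : G.degree v = 1) : G.edgeFinset.card ≤ 1 := by
  -- unique neighbor lemmas
  have huniq : ∀ {a b w : V}, G.degree a = 1 → G.Adj a b → G.Adj a w → w = b := by
    intro a b w ha hab haw
    have hcard : (G.neighborFinset a).card ≤ 1 := by
      rw [G.card_neighborFinset_eq_degree, ha]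
    exact Finset.card_le_one.1 hcard w (by rwa [mem_neighborFinset]) b (by rwa [mem_neighborFinset])
  have key : ∀ {w x : V} (p : G.Walk w x), (x = u ∨ x = v) → w = u ∨ w = v := by
    intro w x p
    induction p with
    | nil => exact id
    | @cons a b c h2 p2 ih =>
      intro hx
      rcases ih hx with h | h
      · right; exact huniq hu huv (G.adj_symm (h ▸ h2))
      · left; exact huniq hv (G.adj_symm huv) (G.adj_symm (h ▸ h2))
  have hall : ∀ w : V, w = u ∨ w = v := by
    intro w
    obtain ⟨p⟩ := (hc.preconnected w u)
    exact key p (Or.inl rfl)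
  have hsub : G.edgeFinset ⊆ {s(u,v)} := by
    intro e he
    rw [mem_edgeFinset] at he
    induction e with
    | _ a b =>
      have hab : G.Adj a b := he
      simp only [Finset.mem_singleton]
      rcases hall a with rfl | rfl <;> rcases hall b with rfl | rfl
      · exact absurd hab (G.irrefl)
      · rfl
      · exact Sym2.eq_swap
      · exact absurd hab (G.irrefl)
  calc G.edgeFinset.card ≤ ({s(u,v)} : Finset (Sym2 V)).card := Finset.card_le_card hsub
    _ = 1 := Finset.card_singleton _


lemma sum_distinct_ge (C : Finset ℕ) (h2 : ∀ c ∈ C, 2 ≤ c) :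
    C.card * (C.card + 3) ≤ 2 * ∑ c ∈ C, c := by
  induction C using Finset.strongInduction with
  | _ C ih =>
    rcases C.eq_empty_or_nonempty with rfl | hCne
    · simp
    · obtain ⟨M, hM, hMmax⟩ := C.exists_max_image id hCne
      have hsub : C ⊆ Finset.Icc 2 M := by
        intro c hc; simp only [Finset.mem_Icc]; exact ⟨h2 c hc, hMmax c hc⟩
      have hcard : C.card ≤ M - 1 := by
        have := Finset.card_le_card hsub
        simpa [Nat.card_Icc] using this
      have hM2 : 2 ≤ M := h2 M hM
      have hkey : C.card + 1 ≤ M := by omega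
      have ihe := ih (C.erase M) (Finset.erase_ssubset hM) (fun c hc => h2 c (Finset.mem_of_mem_erase hc))
      have hce : (C.erase M).card = C.card - 1 := Finset.card_erase_of_mem hM
      have hsum : ∑ c ∈ C, c = M + ∑ c ∈ C.erase M, c := (Finset.add_sum_erase _ _ hM).symm
      have hc1 : 1 ≤ C.card := Finset.card_pos.2 hCne
      rw [hsum]
      rw [hce] at ihe
      obtain ⟨q, hq⟩ : ∃ q, C.card = q + 1 := ⟨C.card - 1, by omega⟩
      rw [hq] at hkey ⊢
      have h1 : q * (q+3) ≤ 2 * ∑ c ∈ C.erase M, c := by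
        have : C.card - 1 = q := by omega
        rwa [this] at ihe
      nlinarith [h1, hkey]


lemma sum_image_le {W : Type*} [DecidableEq W] (s : Finset W) (f : W → ℕ) :
    ∑ c ∈ s.image f, c ≤ ∑ v ∈ s, f v := by
  induction s using Finset.induction with
  | empty => simp
  | insert _ _ hx ih =>
    rename_i a s
    rw [Finset.image_insert, Finset.sum_insert hx]
    by_cases h : f a ∈ s.image f
    · rw [Finset.insert_eq_self.2 h]; omega
    · rw [Finset.sum_insert h]; omega


lemma isKIndep_subset {W : Type*} [Finite W] {H : SimpleGraph W} {k : ℕ} {S T : Set W}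
    (hT : IsKIndepSet H k T) (hST : S ⊆ T) : IsKIndepSet H k S := by
  intro v hv
  refine le_trans (Set.ncard_le_ncard ?_ (Set.toFinite _)) (hT v (hST hv))
  intro u hu; exact ⟨hST hu.1, hu.2⟩

lemma bddAbove_reg {W : Type*} [Fintype W] (H : SimpleGraph W) (k : ℕ) :
    BddAbove {m : ℕ | ∃ S : Set W, S.ncard = m ∧ IsKIndepSet H k S ∧ IsRegularSet H S} := by
  refine ⟨Fintype.card W, ?_⟩
  rintro m ⟨S, rfl, -, -⟩
  simpa [Set.ncard_univ] using Set.ncard_le_ncard (Set.subset_univ S) (Set.toFinite _)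

lemma regular_set_le {W : Type*} [Fintype W] (H : SimpleGraph W) (k : ℕ) (S : Set W)
    (hS : IsRegularSet H S) : S.ncard ≤ kChromNum H k * regKIndepNum H k := by
  classical
  have hne : ∃ c : ℕ, ∃ f : W → Fin c, ∀ i : Fin c, IsKIndepSet H k {v | f v = i} := by
    refine ⟨Fintype.card W, Fintype.equivFin W, fun i => ?_⟩
    intro v hv
    have : {u | u ∈ {v' | Fintype.equivFin W v' = i} ∧ H.Adj v u} = ∅ := by
      ext u
      simp only [Set.mem_setOf_eq, Set.mem_empty_iff_false, iff_false, not_and]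
      intro hu hadj
      have : u = v := (Fintype.equivFin W).injective (by rw [hu, ← hv])
      exact H.irrefl (this ▸ hadj)
    rw [this]; simp
  obtain ⟨f, hf⟩ := Nat.sInf_mem (s := {c : ℕ | ∃ f : W → Fin c, ∀ i : Fin c, IsKIndepSet H k {v | f v = i}}) (by obtain ⟨c, hc⟩ := hne; exact ⟨c, hc⟩)
  set χ := kChromNum H k with hχ
  have hcard : S.toFinset.card = ∑ i : Fin χ, (S.toFinset.filter (fun v => f v = i)).card :=
    by rw [Finset.card_eq_sum_card_fiberwise (s := S.toFinset) (t := Finset.univ) (f := f) (fun x _ => Finset.mem_univ (f x))]; congr!; rename_i h _ _; exact Iff.of_eq (congrArg _ (eq_of_heq h))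
  have hbound : ∀ i : Fin χ, (S.toFinset.filter (fun v => f v = i)).card ≤ regKIndepNum H k := by
    intro i
    apply le_csSup (bddAbove_reg H k)
    refine ⟨(S.toFinset.filter (fun v => f v = i) : Finset W), ?_, ?_, ?_⟩
    · rw [Set.ncard_coe_finset]
    · refine isKIndep_subset (hf i) ?_
      intro x hx
      simp only [Finset.coe_filter, Set.mem_setOf_eq] at hx
      exact hx.2
    · intro a ha b hb
      simp only [Finset.coe_filter, Set.mem_setOf_eq, Set.mem_toFinset] at ha hb
      exact hS a ha.1 b hb.1
  calc S.ncard = S.toFinset.card := Set.ncard_eq_toFinset_card' S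
    _ = ∑ i : Fin χ, (S.toFinset.filter (fun v => f v = i)).card := hcard
    _ ≤ ∑ _i : Fin χ, regKIndepNum H k := Finset.sum_le_sum (fun i _ => hbound i)
    _ = χ * regKIndepNum H k := by simp [Finset.sum_const, Finset.card_univ]


lemma degN_lineGraph (u v : V) (huv : G.Adj u v) (he : s(u,v) ∈ G.edgeSet) :
    degN G.lineGraph (⟨s(u,v), he⟩ : G.edgeSet) + 2 = G.degree u + G.degree v := by
  classical
  set e : G.edgeSet := ⟨s(u,v), he⟩
  set N := {f : G.edgeSet | G.lineGraph.Adj e f}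
  set T : Finset (Sym2 V) := (G.incidenceFinset u ∪ G.incidenceFinset v).erase s(u,v) with hT
  have himg : Subtype.val '' N = (T : Set (Sym2 V)) := by
    ext x
    constructor
    · rintro ⟨⟨x', hx'⟩, hadj, rfl⟩
      obtain ⟨hne, w, hw1, hw2⟩ := lineGraph_adj_iff_exists.1 hadj
      have hne' : x' ≠ s(u,v) := by
        intro h; exact hne (by apply Subtype.ext; simp [e, h])
      have hw1' : w ∈ s(u,v) := hw1
      rw [Sym2.mem_iff] at hw1'
      simp only [hT, Finset.coe_erase, Set.mem_diff, Finset.coe_union, Set.mem_union,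
        Finset.mem_coe, mem_incidenceFinset, Set.mem_singleton_iff]
      refine ⟨?_, hne'⟩
      rcases hw1' with rfl | rfl
      · exact Or.inl ⟨hx', hw2⟩
      · exact Or.inr ⟨hx', hw2⟩
    · intro hx
      simp only [hT, Finset.coe_erase, Set.mem_diff, Finset.coe_union, Set.mem_union,
        Finset.mem_coe, mem_incidenceFinset, Set.mem_singleton_iff] at hx
      obtain ⟨hmem, hne⟩ := hx
      have hxe : x ∈ G.edgeSet := by rcases hmem with h | h <;> exact h.1
      refine ⟨⟨x, hxe⟩, ?_, rfl⟩
      show G.lineGraph.Adj e ⟨x, hxe⟩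
      rw [lineGraph_adj_iff_exists]
      refine ⟨?_, ?_⟩
      · intro h
        exact hne (congrArg Subtype.val h).symm
      · rcases hmem with h | h
        · exact ⟨u, Sym2.mem_mk_left u v, h.2⟩
        · exact ⟨v, Sym2.mem_mk_right u v, h.2⟩
  have h1 : degN G.lineGraph e = T.card := by
    rw [degN, show {u | G.lineGraph.Adj e u} = N from rfl,
      ← Set.ncard_image_of_injective N Subtype.val_injective, himg, Set.ncard_coe_finset]
  have hmem : s(u,v) ∈ G.incidenceFinset u ∪ G.incidenceFinset v := by
    apply Finset.mem_union_left
    rw [mem_incidenceFinset]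
    exact ⟨he, Sym2.mem_mk_left u v⟩
  have h2 : T.card + 1 = (G.incidenceFinset u ∪ G.incidenceFinset v).card := by
    rw [hT, Finset.card_erase_of_mem hmem]
    have : 1 ≤ (G.incidenceFinset u ∪ G.incidenceFinset v).card :=
      Finset.card_pos.2 ⟨_, hmem⟩
    omega
  have hinter : G.incidenceFinset u ∩ G.incidenceFinset v = {s(u,v)} := by
    ext x
    have := G.incidenceSet_inter_incidenceSet_of_adj huv
    simp only [Finset.mem_inter, mem_incidenceFinset, Finset.mem_singleton]
    constructor
    · intro ⟨h1', h2'⟩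
      have hx : x ∈ G.incidenceSet u ∩ G.incidenceSet v := ⟨h1', h2'⟩
      rw [this] at hx
      exact hx
    · rintro rfl
      exact ⟨⟨he, Sym2.mem_mk_left u v⟩, ⟨he, Sym2.mem_mk_right u v⟩⟩
  have h3 := Finset.card_union_add_card_inter (G.incidenceFinset u) (G.incidenceFinset v)
  rw [hinter, Finset.card_singleton, G.card_incidenceFinset_eq_degree,
    G.card_incidenceFinset_eq_degree] at h3
  omega


lemma degN_lineGraph' (e : G.edgeSet) :
    degN G.lineGraph e + 2 = auxF G (e : Sym2 V) := by
  obtain ⟨e', he'⟩ := e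
  induction e' using Sym2.ind with
  | _ a b =>
    have hab : G.Adj a b := he'
    rw [show auxF G ((⟨s(a,b),he'⟩ : G.edgeSet) : Sym2 V) = G.degree a + G.degree b from rfl]
    exact degN_lineGraph a b hab he'

lemma tree_main (hG : G.IsTree) (ρ : ℕ) (hρ : 1 ≤ ρ)
    (hmult : ∀ d : ℕ, (G.edgeFinset.filter (fun e => auxF G e = d)).card ≤ ρ)
    (hm2 : 2 ≤ G.edgeFinset.card) : G.edgeFinset.card ≤ 30 * ρ^2 := by
  classical
  set m := G.edgeFinset.card with hm
  set n := Fintype.card V with hn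
  have f1 : m + 1 = n := hG.card_edgeFinset
  have hsum : ∑ v, G.degree v = 2*m := G.sum_degrees_eq_twice_card_edges
  have hconn : G.Connected := hG.isConnected
  have hdeg1 : ∀ v, 1 ≤ G.degree v := by
    intro v
    have h2n : 1 < n := by omega
    obtain ⟨w, hw⟩ := Fintype.exists_ne_of_one_lt_card (by omega) v
    obtain ⟨p⟩ := hconn.preconnected v w
    cases p with
    | nil => exact absurd rfl hw.symm
    | cons h q => exact Nat.one_le_iff_ne_zero.2 (Nat.pos_iff_ne_zero.1 (G.degree_pos_iff_exists_adj v |>.2 ⟨_, h⟩))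
  have hnoleaf : ∀ {a b : V}, G.Adj a b → G.degree a = 1 → G.degree b = 1 → False := by
    intro a b hab ha hb
    have := no_adj_leaves hconn hab ha hb
    omega
  set A1 : Finset V := univ.filter (fun v => G.degree v = 1) with hA1
  set A2 : Finset V := univ.filter (fun v => G.degree v = 2) with hA2
  set A3 : Finset V := univ.filter (fun v => 3 ≤ G.degree v) with hA3
  set L := A1.card with hL
  set SW := ∑ v ∈ A3, G.degree v with hSW
  have hd12 : Disjoint A1 A2 := by
    rw [Finset.disjoint_left]; intro a h1 h2
    simp only [hA1, hA2, mem_filter] at h1 h2; omega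
  have hd3 : Disjoint (A1 ∪ A2) A3 := by
    rw [Finset.disjoint_left]; intro a h1 h2
    simp only [hA1, hA2, hA3, mem_filter, mem_union] at h1 h2; omega
  have hU : A1 ∪ A2 ∪ A3 = univ := by
    ext v
    simp only [hA1, hA2, hA3, mem_union, mem_filter, mem_univ, true_and, iff_true]
    have := hdeg1 v; omega
  have f3 : L + A2.card + A3.card = n := by
    rw [hL, ← Finset.card_union_of_disjoint hd12, ← Finset.card_union_of_disjoint hd3, hU, hn,
      Finset.card_univ]
  have f2 : L + 2*A2.card + SW = 2*m := by
    have h1 : ∑ v ∈ A1, G.degree v = L := by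
      rw [hL, Finset.card_eq_sum_ones]
      apply Finset.sum_congr rfl
      intro v hv; simp only [hA1, mem_filter] at hv; omega
    have h2 : ∑ v ∈ A2, G.degree v = 2*A2.card := by
      calc ∑ v ∈ A2, G.degree v = ∑ _v ∈ A2, 2 := by
            apply Finset.sum_congr rfl
            intro v hv; simp only [hA2, mem_filter] at hv; omega
        _ = 2*A2.card := by rw [Finset.sum_const, smul_eq_mul, mul_comm]
    have h3 : ∑ v ∈ A1 ∪ A2 ∪ A3, G.degree v = 2*m := by rw [hU]; exact hsum
    rw [Finset.sum_union hd3, Finset.sum_union hd12] at h3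
    omega
  have f4 : 3*A3.card ≤ SW := by
    rw [hSW, mul_comm, ← smul_eq_mul]
    exact Finset.card_nsmul_le_sum A3 _ 3 (fun v hv => by simp only [hA3, mem_filter] at hv; exact hv.2)
  -- edge split
  set p : Sym2 V → Prop := fun e => ∀ x ∈ e, G.degree x ≤ 2 with hp
  set E1 := G.edgeFinset.filter p with hE1
  set E2 := G.edgeFinset.filter (fun e => ¬ p e) with hE2
  have f5 : E1.card + E2.card = m := Finset.card_filter_add_card_filter_not _
  have hE1b : E1.card ≤ 2*ρ := by
    have hsub : E1 ⊆ G.edgeFinset.filter (fun e => auxF G e = 3) ∪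
        G.edgeFinset.filter (fun e => auxF G e = 4) := by
      intro e he
      simp only [hE1, mem_filter] at he
      obtain ⟨hef, hpe⟩ := he
      induction e using Sym2.ind with
      | _ a b =>
        have hab : G.Adj a b := mem_edgeFinset.1 hef
        have h1 : G.degree a ≤ 2 := hpe a (Sym2.mem_mk_left a b)
        have h2 : G.degree b ≤ 2 := hpe b (Sym2.mem_mk_right a b)
        have h3 := hdeg1 a
        have h4 := hdeg1 b
        have h5 : ¬ (G.degree a = 1 ∧ G.degree b = 1) := fun ⟨x, y⟩ => hnoleaf hab x y
        simp only [mem_union, mem_filter, auxF_mk]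
        have h6 : G.degree a + G.degree b = 3 ∨ G.degree a + G.degree b = 4 := by omega
        rcases h6 with h6 | h6
        · exact Or.inl ⟨hef, h6⟩
        · exact Or.inr ⟨hef, h6⟩
    calc E1.card ≤ _ := Finset.card_le_card hsub
      _ ≤ _ := Finset.card_union_le _ _
      _ ≤ 2*ρ := by have := hmult 3; have := hmult 4; omega
  have hE2b : E2.card ≤ SW := by
    have hsub : E2 ⊆ A3.biUnion (fun v => G.incidenceFinset v) := by
      intro e he
      simp only [hE2, mem_filter, hp, not_forall] at he
      obtain ⟨hef, x, hx, hdx⟩ := he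
      rw [Finset.mem_biUnion]
      refine ⟨x, ?_, ?_⟩
      · simp only [hA3, mem_filter, mem_univ, true_and]; omega
      · rw [mem_incidenceFinset]
        exact ⟨mem_edgeFinset.1 hef, hx⟩
    calc E2.card ≤ _ := Finset.card_le_card hsub
      _ ≤ ∑ v ∈ A3, (G.incidenceFinset v).card := Finset.card_biUnion_le
      _ = SW := by
        apply Finset.sum_congr rfl
        intro v _; exact G.card_incidenceFinset_eq_degree v
  -- supports
  set supp : V → V := fun ℓ => if h : ∃ w, G.Adj ℓ w then h.choose else ℓ with hsupp
  have hsupp_adj : ∀ ℓ : V, G.Adj ℓ (supp ℓ) := by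
    intro ℓ
    have h : ∃ w, G.Adj ℓ w := G.degree_pos_iff_exists_adj ℓ |>.1 (hdeg1 ℓ)
    simp only [hsupp, dif_pos h]
    exact h.choose_spec
  have hsupp2 : ∀ ℓ ∈ A1, 2 ≤ G.degree (supp ℓ) := by
    intro ℓ hℓ
    simp only [hA1, mem_filter] at hℓ
    have h1 := hdeg1 (supp ℓ)
    rcases Nat.lt_or_ge (G.degree (supp ℓ)) 2 with h | h
    · exact absurd (hnoleaf (hsupp_adj ℓ) hℓ.2 (by omega)) (fun x => x)
    · exact h
  set C := A1.image (fun ℓ => G.degree (supp ℓ)) with hC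
  set q := C.card with hq
  have hC2 : ∀ c ∈ C, 2 ≤ c := by
    intro c hc
    rw [hC, Finset.mem_image] at hc
    obtain ⟨ℓ, hℓ, rfl⟩ := hc
    exact hsupp2 ℓ hℓ
  have f6 : L ≤ q * ρ := by
    have hfib : L = ∑ c ∈ C, (A1.filter (fun ℓ => G.degree (supp ℓ) = c)).card :=
      Finset.card_eq_sum_card_fiberwise (fun x hx => Finset.mem_image_of_mem _ hx)
    have hfibb : ∀ c ∈ C, (A1.filter (fun ℓ => G.degree (supp ℓ) = c)).card ≤ ρ := by
      intro c hc
      have hinj : ∀ ℓ ∈ A1.filter (fun ℓ => G.degree (supp ℓ) = c),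
          s(ℓ, supp ℓ) ∈ G.edgeFinset.filter (fun e => auxF G e = c + 1) := by
        intro ℓ hℓ
        simp only [mem_filter] at hℓ ⊢
        obtain ⟨hℓ1, hℓ2⟩ := hℓ
        have hd1 : G.degree ℓ = 1 := by simp only [hA1, mem_filter] at hℓ1; exact hℓ1.2
        exact ⟨mem_edgeFinset.2 (hsupp_adj ℓ), by rw [auxF_mk, hd1, hℓ2]; omega⟩
      have hinj2 : Set.InjOn (fun ℓ => s(ℓ, supp ℓ)) (A1.filter (fun ℓ => G.degree (supp ℓ) = c)) := by
        intro a ha b hb hab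
        simp only [mem_coe, mem_filter] at ha hb
        have ha1 : G.degree a = 1 := by simp only [hA1, mem_filter] at ha; exact ha.1.2
        have hb2 : 2 ≤ G.degree (supp b) := hsupp2 b hb.1
        have hb1 : G.degree b = 1 := by simp only [hA1, mem_filter] at hb; exact hb.1.2
        have ha2 : 2 ≤ G.degree (supp a) := hsupp2 a ha.1
        rw [Sym2.eq_iff] at hab
        rcases hab with ⟨h1, h2⟩ | ⟨h1, h2⟩
        · exact h1
        · rw [h1] at ha1; omega
      calc (A1.filter (fun ℓ => G.degree (supp ℓ) = c)).card
          ≤ (G.edgeFinset.filter (fun e => auxF G e = c + 1)).card :=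
            Finset.card_le_card_of_injOn _ hinj hinj2
        _ ≤ ρ := hmult (c+1)
    calc L = _ := hfib
      _ ≤ ∑ _c ∈ C, ρ := Finset.sum_le_sum hfibb
      _ = q * ρ := by rw [Finset.sum_const, smul_eq_mul, hq]
  have f7a : q*(q+3) ≤ 2 * ∑ c ∈ C, c := sum_distinct_ge C hC2
  have f7b : (∑ c ∈ C, c) + L ≤ 2*m := by
    have hCsub : C ⊆ (univ \ A1).image (fun v => G.degree v) := by
      intro c hc
      rw [hC, Finset.mem_image] at hc
      obtain ⟨ℓ, hℓ, rfl⟩ := hc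
      apply Finset.mem_image_of_mem
      rw [Finset.mem_sdiff]
      refine ⟨Finset.mem_univ _, ?_⟩
      simp only [hA1, mem_filter, mem_univ, true_and]
      have := hsupp2 ℓ hℓ; omega
    have h1 : ∑ c ∈ C, c ≤ ∑ v ∈ univ \ A1, G.degree v :=
      le_trans (Finset.sum_le_sum_of_subset hCsub) (sum_image_le _ _)
    have h2 : ∑ v ∈ univ \ A1, G.degree v + ∑ v ∈ A1, G.degree v = 2*m := by
      rw [Finset.sum_sdiff (Finset.subset_univ A1)]; exact hsum
    have h3 : ∑ v ∈ A1, G.degree v = L := by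
      rw [hL, Finset.card_eq_sum_ones]
      apply Finset.sum_congr rfl
      intro v hv; simp only [hA1, mem_filter] at hv; omega
    omega
  -- final arithmetic
  have hLq0 : (0:ℤ) ≤ (L:ℤ) := by positivity
  have hq0 : (0:ℤ) ≤ (q:ℤ) := by positivity
  have hρ1 : (1:ℤ) ≤ (ρ:ℤ) := by exact_mod_cast hρ
  have g1 : (m:ℤ) ≤ 2*ρ + 3*L - 6 := by
    omega
  have g2 : (q:ℤ)*(q+3) + 2*L ≤ 4*m := by
    have := f7a; have := f7b
    push_cast
    nlinarith [f7a, f7b]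
  have g3 : (L:ℤ) ≤ q*ρ := by exact_mod_cast f6
  have : (m:ℤ) ≤ 30*(ρ:ℤ)^2 := by
    nlinarith [mul_le_mul g3 g3 hLq0 (by positivity : (0:ℤ) ≤ (q:ℤ)*ρ),
      mul_le_mul_of_nonneg_right g3 (by positivity : (0:ℤ) ≤ 3*(ρ:ℤ)),
      mul_le_mul_of_nonneg_right g2 (by positivity : (0:ℤ) ≤ (ρ:ℤ)^2),
      mul_le_mul_of_nonneg_right g1 (by positivity : (0:ℤ) ≤ (ρ:ℤ)),
      sq_nonneg ((m:ℤ) - 30*ρ^2), sq_nonneg (3*(L:ℤ) - m),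
      mul_pos (lt_of_lt_of_le zero_lt_one hρ1) (lt_of_lt_of_le zero_lt_one hρ1)]
  exact_mod_cast this


end AuxLemmas

/-- For a tree `G` with `m ≥ 1` edges,
`α_{k-reg}(L(G)) ≥ √m / (√30 · χ_k(L(G)))`. -/
theorem stmt_15 {V : Type*} [Fintype V] (G : SimpleGraph V) (hG : G.IsTree) (k : ℕ)
    (hm : 1 ≤ G.edgeSet.ncard) :
    Real.sqrt (G.edgeSet.ncard) / (Real.sqrt 30 * (kChromNum (G.lineGraph) k : ℝ))
      ≤ (regKIndepNum (G.lineGraph) k : ℝ) := by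
  classical
  set χ := kChromNum (G.lineGraph) k with hχdef
  set α := regKIndepNum (G.lineGraph) k with hαdef
  have hne : G.edgeSet.Nonempty := by
    rw [Set.nonempty_iff_ne_empty]; intro h; rw [h] at hm; simp at hm
  obtain ⟨e₀, he₀⟩ := hne
  have hα : 1 ≤ α := by
    apply le_csSup (bddAbove_reg G.lineGraph k)
    refine ⟨{(⟨e₀, he₀⟩ : G.edgeSet)}, Set.ncard_singleton _, ?_, ?_⟩
    · intro v hv
      have hempty : {u | u ∈ ({(⟨e₀, he₀⟩ : G.edgeSet)} : Set G.edgeSet) ∧ G.lineGraph.Adj v u} = ∅ := by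
        ext u
        simp only [Set.mem_setOf_eq, Set.mem_singleton_iff, Set.mem_empty_iff_false, iff_false,
          not_and]
        rintro rfl hadj
        rw [Set.mem_singleton_iff] at hv
        rw [hv] at hadj
        exact G.lineGraph.irrefl hadj
      rw [hempty]; simp
    · intro a ha b hb
      rw [Set.mem_singleton_iff] at ha hb
      rw [ha, hb]
  have hχ : 1 ≤ χ := by
    by_contra h
    have hχ0 : χ = 0 := by omega
    have hmem := Nat.sInf_mem (s := {c : ℕ | ∃ f : G.edgeSet → Fin c,
        ∀ i : Fin c, IsKIndepSet G.lineGraph k {v | f v = i}}) ?_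
    · rw [hχdef] at hχ0
      rw [kChromNum] at hχ0
      rw [hχ0] at hmem
      obtain ⟨f, -⟩ := hmem
      exact (f ⟨e₀, he₀⟩).elim0
    · refine ⟨Fintype.card G.edgeSet, Fintype.equivFin G.edgeSet, fun i => ?_⟩
      intro v hv
      have hempty : {u | u ∈ {v' | Fintype.equivFin G.edgeSet v' = i} ∧ G.lineGraph.Adj v u} = ∅ := by
        ext u
        simp only [Set.mem_setOf_eq, Set.mem_empty_iff_false, iff_false, not_and]
        intro hu hadj
        have : u = v := (Fintype.equivFin G.edgeSet).injective (by rw [hu, ← hv])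
        exact G.lineGraph.irrefl (this ▸ hadj)
      rw [hempty]; simp
  have hχα : 1 ≤ χ * α := Nat.one_le_iff_ne_zero.2 (by positivity)
  have hmcard : G.edgeSet.ncard = G.edgeFinset.card := by
    rw [← Set.ncard_coe_finset G.edgeFinset, coe_edgeFinset]
  have hmult : ∀ d : ℕ, (G.edgeFinset.filter (fun e => auxF G e = d)).card ≤ χ * α := by
    intro d
    set S : Set G.edgeSet := {e' : G.edgeSet | auxF G (e' : Sym2 V) = d} with hS
    have himg : Subtype.val '' S = ↑(G.edgeFinset.filter (fun e => auxF G e = d)) := by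
      ext x
      simp only [Set.mem_image, hS, Set.mem_setOf_eq, Finset.coe_filter, mem_edgeFinset]
      constructor
      · rintro ⟨⟨x', hx'⟩, hfx, rfl⟩; exact ⟨hx', hfx⟩
      · rintro ⟨hx, hfx⟩; exact ⟨⟨x, hx⟩, hfx, rfl⟩
    have hcard : (G.edgeFinset.filter (fun e => auxF G e = d)).card = S.ncard := by
      rw [← Set.ncard_coe_finset, ← himg, Set.ncard_image_of_injective S Subtype.val_injective]
    rw [hcard]
    apply regular_set_le
    intro a ha b hb
    simp only [hS, Set.mem_setOf_eq] at ha hb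
    have h1 := degN_lineGraph' a
    have h2 := degN_lineGraph' b
    rw [ha] at h1; rw [hb] at h2
    omega
  have hkeynat : G.edgeFinset.card ≤ 30 * (χ * α)^2 := by
    rcases Nat.lt_or_ge G.edgeFinset.card 2 with h2 | h2
    · nlinarith [hχα]
    · exact tree_main hG (χ * α) hχα hmult h2
  have hkey : (G.edgeSet.ncard : ℝ) ≤ 30 * ((χ:ℝ) * α)^2 := by
    rw [hmcard]
    have : ((G.edgeFinset.card : ℝ)) ≤ ((30 * (χ * α)^2 : ℕ) : ℝ) := by exact_mod_cast hkeynat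
    refine this.trans ?_
    push_cast
    ring_nf
    nlinarith []
  have hχpos : (0:ℝ) < χ := by exact_mod_cast hχ
  have h30 : (0:ℝ) < Real.sqrt 30 := Real.sqrt_pos.2 (by norm_num)
  rw [div_le_iff₀ (by positivity)]
  have hsq : Real.sqrt (G.edgeSet.ncard) ≤ Real.sqrt (30 * ((χ:ℝ) * α)^2) := Real.sqrt_le_sqrt hkey
  refine hsq.trans ?_
  rw [Real.sqrt_mul (by norm_num), Real.sqrt_sq (by positivity)]
  nlinarith [Real.sq_sqrt (by norm_num : (30:ℝ) ≥ 0), h30, hχpos]
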